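/- Let L, M be block lower triangular matrices in ℝ^{Nd×Nd} (d×d blocks, N×N block structure). Then dist_AW(L, M) = 0 if and only if there exists a block diagonal matrix Q = diag(Q₁, …, Q_N) with each Q_t ∈ O(d) orthogonal such that M = LQ. -/

import Mathlib

open Matrix BigOperators Classical

/-- Squared Frobenius norm. -/
def frobSq {m n : Type*} [Fintype m] [Fintype n] (C : Matrix m n ℝ) : ℝ :=
  ∑ i, ∑ j, (C i j) ^ 2

/-- Frobenius norm. -/
noncomputable def frobNorm {m n : Type*} [Fintype m] [Fintype n]
    (C : Matrix m n ℝ) : ℝ :=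
  Real.sqrt (frobSq C)

/-- Square root of a positive semidefinite matrix (junk value `0` otherwise). -/
noncomputable def psdSqrt {n : Type*} [Fintype n] [DecidableEq n]
    (A : Matrix n n ℝ) : Matrix n n ℝ :=
  if h : A.PosSemidef then
    (h.1.eigenvectorUnitary : Matrix n n ℝ) * diagonal (Real.sqrt ∘ h.1.eigenvalues) *
      (star h.1.eigenvectorUnitary : Matrix n n ℝ)
  else 0

/-- Nuclear norm: `‖C‖₊ = tr((CᵀC)^{1/2})`, the sum of the singular values. -/
noncomputable def nuclearNorm {m n : Type*} [Fintype m] [Fintype n] [DecidableEq n]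
    (C : Matrix m n ℝ) : ℝ :=
  (psdSqrt (Cᵀ * C)).trace

/-- Squared Bures–Wasserstein distance:
`dist_BW²(A,B) = tr A + tr B − 2 tr((A^{1/2} B A^{1/2})^{1/2})`. -/
noncomputable def distBWsq {n : Type*} [Fintype n] [DecidableEq n]
    (A B : Matrix n n ℝ) : ℝ :=
  A.trace + B.trace - 2 * (psdSqrt (psdSqrt A * B * psdSqrt A)).trace

variable {N d : ℕ}

/-- `L` is block lower triangular: all `d×d` blocks `L_{s,t}` with `s < t` vanish. -/
def BlockLowerTri (L : Matrix (Fin N × Fin d) (Fin N × Fin d) ℝ) : Prop :=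
  ∀ s t : Fin N, s < t → ∀ i j : Fin d, L (s, i) (t, j) = 0

/-- The `t`-th `d×d` diagonal block of a matrix. -/
def diagBlock (A : Matrix (Fin N × Fin d) (Fin N × Fin d) ℝ) (t : Fin N) :
    Matrix (Fin d) (Fin d) ℝ :=
  fun i j => A (t, i) (t, j)

/-- The `t`-th column block `L_{·,t} ∈ ℝ^{Nd×d}` of `L`. -/
def colBlock (L : Matrix (Fin N × Fin d) (Fin N × Fin d) ℝ) (t : Fin N) :
    Matrix (Fin N × Fin d) (Fin d) ℝ :=
  fun p j => L p (t, j)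

/-- Block diagonal matrix built from `d×d` blocks `Q₁, …, Q_N`. -/
def blockDiag (Q : Fin N → Matrix (Fin d) (Fin d) ℝ) :
    Matrix (Fin N × Fin d) (Fin N × Fin d) ℝ :=
  fun p q => if p.1 = q.1 then Q q.1 p.2 q.2 else 0

/-- Squared adapted Wasserstein pseudo-distance between Cholesky factors:
`dist_AW²(L,M) = ‖L‖_F² + ‖M‖_F² − 2 ∑_t ‖(LᵀM)_{t,t}‖₊`. -/
noncomputable def distAWsq (L M : Matrix (Fin N × Fin d) (Fin N × Fin d) ℝ) : ℝ :=
  frobSq L + frobSq M - 2 * ∑ t : Fin N, nuclearNorm (diagBlock (Lᵀ * M) t)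

/-- Adapted Wasserstein pseudo-distance. -/
noncomputable def distAW (L M : Matrix (Fin N × Fin d) (Fin N × Fin d) ℝ) : ℝ :=
  Real.sqrt (distAWsq L M)

section AuxProof

open scoped InnerProductSpace

lemma real_ct {m n : Type*} (A : Matrix m n ℝ) : Aᴴ = Aᵀ := by
  ext i j; simp [Matrix.conjTranspose_apply]

lemma euclid_inner_eq {d : ℕ} (x y : EuclideanSpace ℝ (Fin d)) :
    ⟪x, y⟫_ℝ = ∑ k, x k * y k := by
  simp [PiLp.inner_apply, RCLike.inner_apply, mul_comm]

lemma tms_of_orthonormal {d : ℕ} {w : Fin d → EuclideanSpace ℝ (Fin d)}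
    (hw : Orthonormal ℝ w) :
    (Matrix.of fun k i => w i k)ᵀ * (Matrix.of fun k i => w i k) = 1 := by
  ext i j
  have h := (orthonormal_iff_ite (𝕜 := ℝ)).mp hw i j
  rw [euclid_inner_eq] at h
  rw [Matrix.mul_apply, Matrix.one_apply]
  simpa using h

lemma frobSq_eq_trace {m n : Type*} [Fintype m] [Fintype n] (A : Matrix m n ℝ) :
    frobSq A = (Aᵀ * A).trace := by
  rw [frobSq, Matrix.trace, Finset.sum_comm]
  simp [Matrix.mul_apply, Matrix.diag, sq]

lemma frobSq_nonneg {m n : Type*} [Fintype m] [Fintype n] (A : Matrix m n ℝ) :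
    0 ≤ frobSq A :=
  Finset.sum_nonneg fun _ _ => Finset.sum_nonneg fun _ _ => sq_nonneg _

lemma frobSq_eq_zero {m n : Type*} [Fintype m] [Fintype n] {A : Matrix m n ℝ}
    (h : frobSq A = 0) : A = 0 := by
  ext i j
  have h1 := (Finset.sum_eq_zero_iff_of_nonneg
    (fun i _ => Finset.sum_nonneg fun j _ => sq_nonneg (A i j))).mp h i (Finset.mem_univ i)
  have h2 := (Finset.sum_eq_zero_iff_of_nonneg
    (fun j _ => sq_nonneg (A i j))).mp h1 j (Finset.mem_univ j)
  simpa using (pow_eq_zero_iff two_ne_zero).mp h2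

section PsdSqrtAux
open scoped MatrixOrder

lemma psdSqrt_eq_cfc {n : Type*} [Fintype n] [DecidableEq n] {A : Matrix n n ℝ}
    (h : A.PosSemidef) : psdSqrt A = CFC.sqrt A := by
  rw [CFC.sqrt_eq_cfc, cfc_nnreal_eq_real _ A, h.1.cfc_eq, psdSqrt, dif_pos h]
  simp only [IsHermitian.cfc, Unitary.conjStarAlgAut_apply]
  congr 3
  funext i
  simp [Real.coe_sqrt, h.eigenvalues_nonneg i]

lemma psdSqrt_posSemidef {n : Type*} [Fintype n] [DecidableEq n] {A : Matrix n n ℝ}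
    (h : A.PosSemidef) : (psdSqrt A).PosSemidef :=
  psdSqrt_eq_cfc h ▸ (CFC.sqrt_nonneg A).posSemidef

lemma psdSqrt_mul_self {n : Type*} [Fintype n] [DecidableEq n] {A : Matrix n n ℝ}
    (h : A.PosSemidef) : psdSqrt A * psdSqrt A = A := by
  rw [psdSqrt_eq_cfc h]; exact CFC.sqrt_mul_sqrt_self A h.nonneg

lemma eq_psdSqrt_of_sq_eq {n : Type*} [Fintype n] [DecidableEq n] {A B : Matrix n n ℝ}
    (hB : B.PosSemidef) (hA : A.PosSemidef) (hsq : B ^ 2 = A) : B = psdSqrt A := by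
  rw [psdSqrt_eq_cfc hA]
  exact (CFC.sqrt_unique (by rw [← sq]; exact hsq) hB.nonneg).symm

end PsdSqrtAux
lemma exists_orth_trace {d : ℕ} (C : Matrix (Fin d) (Fin d) ℝ) :
    ∃ Q : Matrix (Fin d) (Fin d) ℝ, Qᵀ * Q = 1 ∧ (C * Q).trace = nuclearNorm C := by
  have hpsd : (Cᵀ * C).PosSemidef := by
    simpa [real_ct] using Matrix.posSemidef_conjTranspose_mul_self C
  set P := psdSqrt (Cᵀ * C) with hPdef
  have hP : P.PosSemidef := psdSqrt_posSemidef hpsd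
  have hPsq : P * P = Cᵀ * C := psdSqrt_mul_self hpsd
  have hnuc : nuclearNorm C = P.trace := by
    rw [nuclearNorm, hPdef]
  set σ : Fin d → ℝ := hP.1.eigenvalues with hσdef
  have hσ0 : ∀ i, 0 ≤ σ i := hP.eigenvalues_nonneg
  set v : Fin d → EuclideanSpace ℝ (Fin d) := fun i => hP.1.eigenvectorBasis i with hvdef
  have hPv : ∀ i, P *ᵥ (v i) = σ i • (v i) := fun i => hP.1.mulVec_eigenvectorBasis i
  have hvv : ∀ i j, (v i : Fin d → ℝ) ⬝ᵥ (v j : Fin d → ℝ) = if i = j then (1:ℝ) else 0 := by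
    intro i j
    have h := (orthonormal_iff_ite (𝕜 := ℝ)).mp hP.1.eigenvectorBasis.orthonormal i j
    rw [euclid_inner_eq] at h
    simpa [dotProduct] using h
  have hdot : ∀ x y : Fin d → ℝ, (C *ᵥ x) ⬝ᵥ (C *ᵥ y) = x ⬝ᵥ ((Cᵀ * C) *ᵥ y) := by
    intro x y
    rw [← Matrix.mulVec_mulVec, dotProduct_mulVec x, Matrix.vecMul_transpose]
  have key : ∀ i j, (C *ᵥ (v i : Fin d → ℝ)) ⬝ᵥ (C *ᵥ (v j : Fin d → ℝ))
      = if i = j then σ j ^ 2 else 0 := by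
    intro i j
    have h1 : (Cᵀ * C) *ᵥ (v j : Fin d → ℝ) = (σ j ^ 2) • (v j : Fin d → ℝ) := by
      rw [← hPsq, ← Matrix.mulVec_mulVec, hPv j, Matrix.mulVec_smul, hPv j, smul_smul, sq]
    rw [hdot, h1, dotProduct_smul, hvv]
    by_cases hij : i = j <;> simp [hij]
  classical
  set s : Set (Fin d) := {i | 0 < σ i} with hsdef
  set u : Fin d → EuclideanSpace ℝ (Fin d) :=
    fun i => if 0 < σ i then (σ i)⁻¹ • (WithLp.equiv 2 (Fin d → ℝ)).symm (C *ᵥ (v i : Fin d → ℝ)) else 0 with hudef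
  have hu_apply : ∀ i, 0 < σ i → ∀ k, (u i) k = (σ i)⁻¹ * (C *ᵥ (v i : Fin d → ℝ)) k := by
    intro i hi k
    simp [hudef, hi]
  have hu_on : Orthonormal ℝ (s.restrict u) := by
    rw [orthonormal_iff_ite]
    rintro ⟨i, hi⟩ ⟨j, hj⟩
    have hi' : 0 < σ i := hi
    have hj' : 0 < σ j := hj
    rw [show s.restrict u ⟨i, hi⟩ = u i from rfl, show s.restrict u ⟨j, hj⟩ = u j from rfl,
      euclid_inner_eq]
    have : ∀ k, (u i) k * (u j) k
        = (σ i)⁻¹ * (σ j)⁻¹ * ((C *ᵥ (v i : Fin d → ℝ)) k * (C *ᵥ (v j : Fin d → ℝ)) k) := by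
      intro k; rw [hu_apply i hi' k, hu_apply j hj' k]; ring
    rw [Finset.sum_congr rfl fun k _ => this k, ← Finset.mul_sum]
    have hsum : (∑ k, (C *ᵥ (v i : Fin d → ℝ)) k * (C *ᵥ (v j : Fin d → ℝ)) k)
        = if i = j then σ j ^ 2 else 0 := key i j
    rw [hsum]
    by_cases hij : i = j
    · subst hij
      rw [if_pos rfl, if_pos rfl]
      have h0 : σ i ≠ 0 := ne_of_gt hi'
      field_simp
    · rw [if_neg hij, if_neg (by simp [Subtype.ext_iff, hij])]
      simp
  have hcard : Module.finrank ℝ (EuclideanSpace ℝ (Fin d)) = Fintype.card (Fin d) := by simp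
  obtain ⟨b, hb⟩ := hu_on.exists_orthonormalBasis_extension_of_card_eq hcard
  set U : Matrix (Fin d) (Fin d) ℝ := Matrix.of fun k i => b i k with hUdef
  set Vm : Matrix (Fin d) (Fin d) ℝ := Matrix.of fun k i => (v i : Fin d → ℝ) k with hVdef
  have hU : Uᵀ * U = 1 := tms_of_orthonormal b.orthonormal
  have hVm : Vmᵀ * Vm = 1 := tms_of_orthonormal hP.1.eigenvectorBasis.orthonormal
  have hUU : U * Uᵀ = 1 := mul_eq_one_comm.mp hU
  refine ⟨Vm * Uᵀ, ?_, ?_⟩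
  · rw [Matrix.transpose_mul, Matrix.transpose_transpose, Matrix.mul_assoc,
      ← Matrix.mul_assoc Vmᵀ Vm Uᵀ, hVm, Matrix.one_mul, hUU]
  · rw [← Matrix.mul_assoc, Matrix.trace_mul_comm, hnuc]
    have hCV : ∀ i k, (C * Vm) k i = (C *ᵥ (v i : Fin d → ℝ)) k := by
      intro i k; simp [Matrix.mul_apply, Matrix.mulVec, dotProduct, hVdef]
    have hdiag : ∀ i, (Uᵀ * (C * Vm)) i i = σ i := by
      intro i
      rw [Matrix.mul_apply]
      by_cases hi : 0 < σ i
      · have : ∀ k, Uᵀ i k * (C * Vm) k i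
            = (σ i)⁻¹ * ((C *ᵥ (v i : Fin d → ℝ)) k * (C *ᵥ (v i : Fin d → ℝ)) k) := by
          intro k
          rw [hCV]
          have hbk : Uᵀ i k = (u i) k := by
            simp [hUdef, Matrix.transpose_apply, hb i hi]
          rw [hbk, hu_apply i hi k]; ring
        have hkey : (∑ k, (C *ᵥ (v i : Fin d → ℝ)) k * (C *ᵥ (v i : Fin d → ℝ)) k)
            = if i = i then σ i ^ 2 else 0 := key i i
        rw [if_pos rfl] at hkey
        rw [Finset.sum_congr rfl fun k _ => this k, ← Finset.mul_sum, hkey]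
        have h0 : σ i ≠ 0 := ne_of_gt hi
        field_simp
      · have hσi : σ i = 0 := le_antisymm (not_lt.mp hi) (hσ0 i)
        have h0 : (C *ᵥ (v i : Fin d → ℝ)) = 0 := by
          have hkey := key i i
          simp [hσi] at hkey
          exact hkey
        have : ∀ k, Uᵀ i k * (C * Vm) k i = 0 := by
          intro k; rw [hCV, h0]; simp
        rw [Finset.sum_congr rfl fun k _ => this k]
        simp [hσi]
    have htr : (Uᵀ * (C * Vm)).trace = ∑ i, σ i := by
      rw [Matrix.trace]
      exact Finset.sum_congr rfl fun i _ => hdiag i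
    rw [htr]
    have hVmV : Vm * Vmᵀ = 1 := mul_eq_one_comm.mp hVm
    have hPV : ∀ i k, (P * Vm) k i = σ i * (v i : Fin d → ℝ) k := by
      intro i k
      have h := congrFun (hPv i) k
      simpa [Matrix.mul_apply, Matrix.mulVec, dotProduct, hVdef] using h
    have h1 : (Vmᵀ * (P * Vm)).trace = P.trace := by
      rw [Matrix.trace_mul_comm, Matrix.mul_assoc, hVmV, Matrix.mul_one]
    have h2 : ∀ i, (Vmᵀ * (P * Vm)) i i = σ i := by
      intro i
      rw [Matrix.mul_apply]
      have hterm : ∀ k, Vmᵀ i k * (P * Vm) k i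
          = σ i * ((v i : Fin d → ℝ) k * (v i : Fin d → ℝ) k) := by
        intro k
        rw [hPV]
        simp only [Matrix.transpose_apply, hVdef, Matrix.of_apply]
        ring
      rw [Finset.sum_congr rfl fun k _ => hterm k, ← Finset.mul_sum]
      have hv1 : (∑ k, (v i : Fin d → ℝ) k * (v i : Fin d → ℝ) k)
          = if i = i then (1:ℝ) else 0 := hvv i i
      rw [if_pos rfl] at hv1
      rw [hv1, mul_one]
    have h3 : P.trace = ∑ i, σ i := by
      rw [← h1, Matrix.trace]
      exact Finset.sum_congr rfl fun i _ => h2 i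
    rw [h3]
lemma exists_procrustes {m : Type*} [Fintype m] {d : ℕ} (A B : Matrix m (Fin d) ℝ) :
    ∃ R : Matrix (Fin d) (Fin d) ℝ, Rᵀ * R = 1 ∧
      frobSq (B - A * R) = frobSq A + frobSq B - 2 * nuclearNorm (Aᵀ * B) := by
  obtain ⟨Q, hQ, hTr⟩ := exists_orth_trace (Aᵀ * B)
  have hQQ : Q * Qᵀ = 1 := mul_eq_one_comm.mp hQ
  refine ⟨Qᵀ, by rw [Matrix.transpose_transpose, hQQ], ?_⟩
  have h2 : ((Q * Aᵀ) * B).trace = nuclearNorm (Aᵀ * B) := by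
    rw [Matrix.mul_assoc, Matrix.trace_mul_comm, hTr]
  have h1 : (Bᵀ * (A * Qᵀ)).trace = nuclearNorm (Aᵀ * B) := by
    have ht : (Q * Aᵀ * B)ᵀ = Bᵀ * (A * Qᵀ) := by
      rw [Matrix.transpose_mul, Matrix.transpose_mul, Matrix.transpose_transpose]
    rw [← ht, Matrix.trace_transpose, h2]
  have h3 : ((Q * Aᵀ) * (A * Qᵀ)).trace = frobSq A := by
    rw [← Matrix.mul_assoc, Matrix.trace_mul_comm,
      ← Matrix.mul_assoc Qᵀ (Q * Aᵀ) A, ← Matrix.mul_assoc Qᵀ Q Aᵀ, hQ, Matrix.one_mul,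
      frobSq_eq_trace]
  rw [frobSq_eq_trace (B - A * Qᵀ), Matrix.transpose_sub, Matrix.transpose_mul,
    Matrix.transpose_transpose, Matrix.sub_mul, Matrix.mul_sub, Matrix.mul_sub,
    Matrix.trace_sub, Matrix.trace_sub, Matrix.trace_sub, h1, h2, h3,
    frobSq_eq_trace B]
  ring

variable {N d : ℕ}

lemma diagBlock_eq (L M : Matrix (Fin N × Fin d) (Fin N × Fin d) ℝ) (t : Fin N) :
    diagBlock (Lᵀ * M) t = (colBlock L t)ᵀ * colBlock M t := by
  ext i j
  rfl

lemma frobSq_col (L : Matrix (Fin N × Fin d) (Fin N × Fin d) ℝ) :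
    frobSq L = ∑ t, frobSq (colBlock L t) := by
  calc frobSq L = ∑ p : Fin N × Fin d, ∑ t : Fin N, ∑ j : Fin d, (L p (t, j)) ^ 2 := by
        rw [frobSq]
        exact Finset.sum_congr rfl fun p _ => Fintype.sum_prod_type (f := fun q => L p q ^ 2)
    _ = ∑ t : Fin N, ∑ p : Fin N × Fin d, ∑ j : Fin d, (L p (t, j)) ^ 2 := Finset.sum_comm
    _ = ∑ t, frobSq (colBlock L t) := rfl

lemma colBlock_mul_blockDiag (L : Matrix (Fin N × Fin d) (Fin N × Fin d) ℝ)
    (Q : Fin N → Matrix (Fin d) (Fin d) ℝ) (t : Fin N) :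
    colBlock (L * blockDiag Q) t = colBlock L t * Q t := by
  ext p j
  rw [colBlock, Matrix.mul_apply]
  show (∑ q : Fin N × Fin d, L p q * blockDiag Q q (t, j)) = _
  rw [Fintype.sum_prod_type, Finset.sum_comm]
  simp only [_root_.blockDiag, mul_ite, mul_zero]
  simp [Finset.sum_ite_eq', colBlock, Matrix.mul_apply]

lemma eq_mul_blockDiag_of_colBlocks {L M : Matrix (Fin N × Fin d) (Fin N × Fin d) ℝ}
    {Q : Fin N → Matrix (Fin d) (Fin d) ℝ}
    (h : ∀ t, colBlock M t = colBlock L t * Q t) : M = L * blockDiag Q := by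
  ext p q
  obtain ⟨t, j⟩ := q
  have h1 : M p (t, j) = colBlock M t p j := rfl
  rw [h1, h t, ← colBlock_mul_blockDiag]
  rfl

lemma nuclearNorm_psd_mul_orth {d : ℕ} {S Q : Matrix (Fin d) (Fin d) ℝ}
    (hS : S.PosSemidef) (hQ : Qᵀ * Q = 1) : nuclearNorm (S * Q) = S.trace := by
  have hQQ : Q * Qᵀ = 1 := mul_eq_one_comm.mp hQ
  have hSym : Sᵀ = S := by rw [← real_ct]; exact hS.1
  have hpsd' : ((S * Q)ᵀ * (S * Q)).PosSemidef := by
    simpa [real_ct] using Matrix.posSemidef_conjTranspose_mul_self (S * Q)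
  have hT : (Qᵀ * S * Q).PosSemidef := by
    have := hS.mul_mul_conjTranspose_same Qᵀ
    simpa [real_ct] using this
  have hsq : (Qᵀ * S * Q) ^ 2 = (S * Q)ᵀ * (S * Q) := by
    rw [pow_two, Matrix.transpose_mul, hSym]
    simp only [Matrix.mul_assoc]
    rw [← Matrix.mul_assoc Q Qᵀ (S * Q), hQQ, Matrix.one_mul]
  have heq : Qᵀ * S * Q = psdSqrt ((S * Q)ᵀ * (S * Q)) := eq_psdSqrt_of_sq_eq hT hpsd' hsq
  rw [nuclearNorm, ← heq, Matrix.trace_mul_comm,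
    ← Matrix.mul_assoc, hQQ, Matrix.one_mul]

lemma frobSq_mul_orth {m : Type*} [Fintype m] {d : ℕ} (A : Matrix m (Fin d) ℝ)
    {Q : Matrix (Fin d) (Fin d) ℝ} (hQ : Qᵀ * Q = 1) : frobSq (A * Q) = frobSq A := by
  have hQQ : Q * Qᵀ = 1 := mul_eq_one_comm.mp hQ
  rw [frobSq_eq_trace, frobSq_eq_trace, Matrix.transpose_mul, Matrix.trace_mul_comm,
    Matrix.mul_assoc, ← Matrix.mul_assoc Q Qᵀ Aᵀ, hQQ, Matrix.one_mul,
    Matrix.trace_mul_comm]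

end AuxProof
/-- Degeneracy of `dist_AW`: `dist_AW(L,M) = 0` iff `M = LQ` for some block
diagonal matrix `Q = diag(Q₁,…,Q_N)` with each `Q_t` orthogonal. -/
theorem distAW_eq_zero_iff (N d : ℕ)
    (L M : Matrix (Fin N × Fin d) (Fin N × Fin d) ℝ)
    (hL : BlockLowerTri L) (hM : BlockLowerTri M) :
    distAW L M = 0 ↔
      ∃ Q : Fin N → Matrix (Fin d) (Fin d) ℝ,
        (∀ t, (Q t)ᵀ * Q t = 1) ∧ M = L * blockDiag Q := by
  constructor
  · intro h
    have hex : ∀ t : Fin N, ∃ R : Matrix (Fin d) (Fin d) ℝ, Rᵀ * R = 1 ∧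
        frobSq (colBlock M t - colBlock L t * R) =
          frobSq (colBlock L t) + frobSq (colBlock M t)
            - 2 * nuclearNorm (diagBlock (Lᵀ * M) t) := by
      intro t
      obtain ⟨R, h1, h2⟩ := exists_procrustes (colBlock L t) (colBlock M t)
      exact ⟨R, h1, by rw [diagBlock_eq]; exact h2⟩
    choose R hR1 hR2 using hex
    have hsum : distAWsq L M = ∑ t, frobSq (colBlock M t - colBlock L t * R t) := by
      rw [distAWsq, frobSq_col L, frobSq_col M,
        Finset.sum_congr rfl fun t _ => hR2 t,
        Finset.sum_sub_distrib, Finset.sum_add_distrib, Finset.mul_sum]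
    rw [distAW] at h
    have h0 : distAWsq L M ≤ 0 := Real.sqrt_eq_zero'.mp h
    have hnn : ∀ t ∈ Finset.univ, (0:ℝ) ≤ frobSq (colBlock M t - colBlock L t * R t) :=
      fun t _ => frobSq_nonneg _
    have hz : ∑ t, frobSq (colBlock M t - colBlock L t * R t) = 0 :=
      le_antisymm (by rw [← hsum]; exact h0) (Finset.sum_nonneg hnn)
    refine ⟨R, hR1, eq_mul_blockDiag_of_colBlocks fun t => ?_⟩
    have hz0 := (Finset.sum_eq_zero_iff_of_nonneg hnn).mp hz t (Finset.mem_univ t)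
    exact sub_eq_zero.mp (frobSq_eq_zero hz0)
  · rintro ⟨Q, hQ, rfl⟩
    rw [distAW]
    have hd : distAWsq L (L * blockDiag Q) = 0 := by
      rw [distAWsq, frobSq_col (L * blockDiag Q), frobSq_col L]
      have h1 : ∀ t, frobSq (colBlock (L * blockDiag Q) t) = frobSq (colBlock L t) := by
        intro t; rw [colBlock_mul_blockDiag, frobSq_mul_orth _ (hQ t)]
      have h2 : ∀ t, nuclearNorm (diagBlock (Lᵀ * (L * blockDiag Q)) t)
          = frobSq (colBlock L t) := by
        intro t
        rw [diagBlock_eq, colBlock_mul_blockDiag, ← Matrix.mul_assoc]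
        have hpsd : ((colBlock L t)ᵀ * colBlock L t).PosSemidef := by
          simpa [real_ct] using Matrix.posSemidef_conjTranspose_mul_self (colBlock L t)
        rw [nuclearNorm_psd_mul_orth hpsd (hQ t), ← frobSq_eq_trace]
      rw [Finset.sum_congr rfl fun t _ => h1 t, Finset.sum_congr rfl fun t _ => h2 t]
      ring
    rw [hd, Real.sqrt_zero]
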